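/- arXiv:1510.03227 — 6 statements merged into one kernel-verified Lean document; each statement's English description precedes it below -/
import Mathlib

section
/- Let A1 and A2 be matrices in Z^{2×2} such that A1 is nonzero and, for every t ∈ Z, the matrix t·A1 + A2 belongs to SL(2,Z). Then there exist matrices B and C in SL(2,Z) and an integer k such that t·A1 + A2 = B·T^{k t}·C for every t ∈ Z, where T is the matrix with rows (1,1) and (0,1). -/
open Matrix MatrixGroups

lemma dvd_gcd_sq' {a b : ℤ} (hb : b ∣ a ^ 2) : b ∣ (Int.gcd a b : ℤ) ^ 2 := by
  rcases eq_or_ne b 0 with rfl | hb0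
  · have ha : a = 0 := pow_eq_zero_iff (n := 2) (by norm_num) |>.mp (zero_dvd_iff.mp hb)
    simp [ha]
  · have hgpos : 0 < Int.gcd a b := Int.gcd_pos_of_ne_zero_right a hb0
    have hgz : ((Int.gcd a b : ℤ)) ≠ 0 := by exact_mod_cast hgpos.ne'
    obtain ⟨a', ha⟩ := Int.gcd_dvd_left (a := a) (b := b)
    obtain ⟨b', hbb⟩ := Int.gcd_dvd_right (a := a) (b := b)
    have hcop : IsCoprime a' b' := by
      rw [Int.isCoprime_iff_gcd_eq_one]
      have h2 := Int.gcd_div_gcd_div_gcd hgpos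
      have e1 : a / (Int.gcd a b : ℤ) = a' := by
        exact Int.ediv_eq_of_eq_mul_left hgz (by linear_combination ha)
      have e2 : b / (Int.gcd a b : ℤ) = b' := by
        exact Int.ediv_eq_of_eq_mul_left hgz (by linear_combination hbb)
      rwa [e1, e2] at h2
    obtain ⟨g, hg⟩ : ∃ g : ℤ, g = (Int.gcd a b : ℤ) := ⟨_, rfl⟩
    rw [← hg] at ha hbb ⊢
    have hg0 : g ≠ 0 := by rw [hg]; exact hgz
    have hb'0 : b' ≠ 0 := by rintro rfl; simp at hbb; exact hb0 hbb
    obtain ⟨c, hc⟩ := hb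
    rw [ha, hbb] at hc
    have key : b' * c = g * a' ^ 2 := by
      apply mul_left_cancel₀ hg0; linear_combination -hc
    have hdvd : b' ∣ g * a' ^ 2 := ⟨c, key.symm⟩
    obtain ⟨d, hd⟩ := (IsCoprime.pow_right hcop.symm).dvd_of_dvd_mul_right hdvd
    exact ⟨d, by rw [hbb, hd]; ring⟩

lemma nil_param (α β γ : ℤ) (hdet : α ^ 2 + β * γ = 0) :
    (α = 0 ∧ β = 0 ∧ γ = 0) ∨
    ∃ k p q r s : ℤ, p * s - q * r = 1 ∧ β = k * p ^ 2 ∧ α = -(k * p * q) ∧ γ = -(k * q ^ 2) := by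
  rcases eq_or_ne β 0 with rfl | hβ0
  · have hα : α = 0 := by nlinarith
    rcases eq_or_ne γ 0 with rfl | hγ0
    · exact Or.inl ⟨hα, rfl, rfl⟩
    · exact Or.inr ⟨-γ, 0, 1, -1, 0, by ring, by ring, by simp [hα], by ring⟩
  · right
    have hgpos : 0 < Int.gcd α β := Int.gcd_pos_of_ne_zero_right α hβ0
    have hgz : ((Int.gcd α β : ℤ)) ≠ 0 := by exact_mod_cast hgpos.ne'
    obtain ⟨a', ha⟩ := Int.gcd_dvd_left (a := α) (b := β)
    obtain ⟨b', hbb⟩ := Int.gcd_dvd_right (a := α) (b := β)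
    have hcop : IsCoprime a' b' := by
      rw [Int.isCoprime_iff_gcd_eq_one]
      have h2 := Int.gcd_div_gcd_div_gcd hgpos
      have e1 : α / (Int.gcd α β : ℤ) = a' := by
        exact Int.ediv_eq_of_eq_mul_left hgz (by linear_combination ha)
      have e2 : β / (Int.gcd α β : ℤ) = b' := by
        exact Int.ediv_eq_of_eq_mul_left hgz (by linear_combination hbb)
      rwa [e1, e2] at h2
    obtain ⟨k, hk⟩ := dvd_gcd_sq' (a := α) (b := β) ⟨-γ, by linarith⟩
    obtain ⟨g, hg⟩ : ∃ g : ℤ, g = (Int.gcd α β : ℤ) := ⟨_, rfl⟩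
    rw [← hg] at ha hbb hk
    have hg0 : g ≠ 0 := by rw [hg]; exact hgz
    have hb'0 : b' ≠ 0 := by rintro rfl; simp at hbb; exact hβ0 hbb
    have hgk : g = b' * k := by
      apply mul_left_cancel₀ hg0
      linear_combination hk + k * hbb
    have h1 : b' * γ = -(g * a' ^ 2) := by
      apply mul_left_cancel₀ hg0
      linear_combination -(γ * hbb) - (α + g * a') * ha + hdet
    obtain ⟨u, v, huv⟩ := hcop.symm
    refine ⟨k, b', -a', v, u, by linear_combination huv, ?_, ?_, ?_⟩
    · linear_combination hbb + b' * hgk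
    · linear_combination ha + a' * hgk
    · apply mul_left_cancel₀ hb'0
      linear_combination h1 - a' ^ 2 * hgk


/-- If `A1 ≠ 0` and `t • A1 + A2 ∈ SL(2,ℤ)` for all integers `t`, then
`t • A1 + A2 = B * T^(k*t) * C` for some `B, C ∈ SL(2,ℤ)` and `k ∈ ℤ`,
where `T = !![1,1; 0,1]`. -/
theorem linear_family_eq_BTktC (A1 A2 : Matrix (Fin 2) (Fin 2) ℤ) (hA1 : A1 ≠ 0)
    (h : ∀ t : ℤ, (t • A1 + A2).det = 1) :
    ∃ (B C : SL(2, ℤ)) (k : ℤ), ∀ t : ℤ,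
      t • A1 + A2 = ((B * ModularGroup.T ^ (k * t) * C : SL(2, ℤ)) :
        Matrix (Fin 2) (Fin 2) ℤ) := by
  have hgen : ∀ t : ℤ, (t * A1 0 0 + A2 0 0) * (t * A1 1 1 + A2 1 1)
      - (t * A1 0 1 + A2 0 1) * (t * A1 1 0 + A2 1 0) = 1 := by
    intro t
    have := h t
    rw [Matrix.det_fin_two] at this
    simp only [Matrix.add_apply, Matrix.smul_apply, smul_eq_mul] at this
    exact this
  have h0 : A2 0 0 * A2 1 1 - A2 0 1 * A2 1 0 = 1 := by linear_combination hgen 0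
  have hP : A1 0 0 * A1 1 1 - A1 0 1 * A1 1 0 = 0 := by
    have h2 : (A1 0 0 * A1 1 1 - A1 0 1 * A1 1 0) * 2 = 0 := by
      linear_combination hgen 1 + hgen (-1) - 2 * hgen 0
    linarith
  have hQ : A1 0 0 * A2 1 1 + A1 1 1 * A2 0 0 - A1 0 1 * A2 1 0 - A1 1 0 * A2 0 1 = 0 := by
    have h2 : (A1 0 0 * A2 1 1 + A1 1 1 * A2 0 0 - A1 0 1 * A2 1 0 - A1 1 0 * A2 0 1) * 2 = 0 := by
      linear_combination hgen 1 - hgen (-1)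
    linarith
  have hdet : (A1 0 0 * A2 1 1 - A1 0 1 * A2 1 0) ^ 2
      + (A1 0 1 * A2 0 0 - A1 0 0 * A2 0 1) * (A1 1 0 * A2 1 1 - A1 1 1 * A2 1 0) = 0 := by
    linear_combination (A1 0 0 * A2 1 1 - A1 0 1 * A2 1 0) * hQ
      - (A2 0 0 * A2 1 1 - A2 0 1 * A2 1 0) * hP
  rcases nil_param _ _ _ hdet with ⟨hzα, hzβ, hzγ⟩ | ⟨k, p, q, r, s, hpqrs, hβ, hα, hγ⟩
  · exfalso
    apply hA1
    ext i j
    fin_cases i <;> fin_cases j <;> simp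
    · linear_combination A2 0 0 * hzα + A2 1 0 * hzβ - A1 0 0 * h0
    · linear_combination A2 0 1 * hzα + A2 1 1 * hzβ - A1 0 1 * h0
    · linear_combination A2 0 0 * hzγ + A2 1 0 * hQ - A2 1 0 * hzα - A1 1 0 * h0
    · linear_combination A2 0 1 * hzγ + A2 1 1 * hQ - A2 1 1 * hzα - A1 1 1 * h0
  · have hdetA2 : A2.det = 1 := by rw [Matrix.det_fin_two]; linear_combination h0
    have hdetB : (!![p, r; q, s] : Matrix (Fin 2) (Fin 2) ℤ).det = 1 := by
      rw [Matrix.det_fin_two_of]; linear_combination hpqrs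
    let B : SL(2,ℤ) := ⟨!![p, r; q, s], hdetB⟩
    let A2' : SL(2,ℤ) := ⟨A2, hdetA2⟩
    refine ⟨B, B⁻¹ * A2', k, fun t => ?_⟩
    rw [Matrix.SpecialLinearGroup.coe_mul, Matrix.SpecialLinearGroup.coe_mul, Matrix.SpecialLinearGroup.coe_mul,
      Matrix.SpecialLinearGroup.coe_inv, ModularGroup.coe_T_zpow]
    show t • A1 + A2 = !![p, r; q, s] * !![1, (k*t : ℤ); 0, 1] * ((!![p, r; q, s]).adjugate * A2)
    rw [Matrix.adjugate_fin_two_of]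
    ext i j
    fin_cases i <;> fin_cases j <;>
      simp only [Matrix.add_apply, Matrix.smul_apply, smul_eq_mul, Matrix.mul_apply,
        Fin.sum_univ_two, Matrix.cons_val', Matrix.cons_val_zero, Matrix.cons_val_one,
        Matrix.head_cons, Matrix.head_fin_const, Matrix.empty_val',
        Matrix.cons_val_fin_one, Matrix.of_apply, Fin.mk_zero, Fin.mk_one, Fin.isValue]
    · linear_combination (-(A2 0 0)) * hpqrs - t * A1 0 0 * h0 + t * A2 0 0 * hα + t * A2 1 0 * hβ
    · linear_combination (-(A2 0 1)) * hpqrs - t * A1 0 1 * h0 + t * A2 0 1 * hα + t * A2 1 1 * hβ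
    · linear_combination (-(A2 1 0)) * hpqrs - t * A1 1 0 * h0 + t * A2 0 0 * hγ - t * A2 1 0 * hα + t * A2 1 0 * hQ
    · linear_combination (-(A2 1 1)) * hpqrs - t * A1 1 1 * h0 + t * A2 0 1 * hγ - t * A2 1 1 * hα + t * A2 1 1 * hQ
end

section
/- Let x = (x1, x2) and y = (y1, y2) be vectors in Z × Z with x not equal to the zero vector, and consider the matrix equation M x = y with unknown M in SL(2,Z). Then either this equation has no solution, or there exist matrices B and C in SL(2,Z) and an integer k such that the set of solutions is exactly { B·T^{k t}·C : t ∈ Z }, where T is the matrix with rows (1,1) and (0,1). -/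
open Matrix MatrixGroups

lemma mulVec_inv_iff (A : SL(2,ℤ)) (u v : Fin 2 → ℤ) :
    (A : Matrix (Fin 2) (Fin 2) ℤ).mulVec u = v ↔
    u = ((A⁻¹ : SL(2,ℤ)) : Matrix (Fin 2) (Fin 2) ℤ).mulVec v := by
  constructor
  · rintro rfl
    rw [Matrix.mulVec_mulVec, ← Matrix.SpecialLinearGroup.coe_mul, inv_mul_cancel]
    simp
  · rintro rfl
    rw [Matrix.mulVec_mulVec, ← Matrix.SpecialLinearGroup.coe_mul, mul_inv_cancel]
    simp

lemma stab_e1 (N : SL(2,ℤ)) :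
    (N : Matrix (Fin 2) (Fin 2) ℤ).mulVec ![1,0] = ![1,0] ↔ ∃ t : ℤ, N = ModularGroup.T ^ t := by
  constructor
  · intro h
    have h0 := congrFun h 0
    have h1 := congrFun h 1
    simp [Matrix.mulVec, Fin.sum_univ_two, Matrix.vecHead, Matrix.vecTail] at h0 h1
    have hd := N.property
    rw [Matrix.det_fin_two] at hd
    refine ⟨N.1 0 1, ?_⟩
    ext i j
    rw [ModularGroup.coe_T_zpow]
    fin_cases i <;> fin_cases j <;> simp_all
  · rintro ⟨t, rfl⟩
    rw [ModularGroup.coe_T_zpow]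
    ext i
    fin_cases i <;> simp [Matrix.mulVec, Fin.sum_univ_two, Matrix.vecHead, Matrix.vecTail]

lemma stab_vec (y1 y2 : ℤ) (hy : ¬(y1 = 0 ∧ y2 = 0)) :
    ∃ A : SL(2,ℤ), ∀ N : SL(2,ℤ),
      (N : Matrix (Fin 2) (Fin 2) ℤ).mulVec ![y1,y2] = ![y1,y2] ↔
      ∃ t : ℤ, N = A * ModularGroup.T ^ t * A⁻¹ := by
  set g : ℤ := (Int.gcd y1 y2 : ℤ) with hg
  have hg0 : g ≠ 0 := by
    simp [hg, Int.gcd_eq_zero_iff]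
    tauto
  set a : ℤ := y1 / g with ha
  set b : ℤ := y2 / g with hb
  have hy1 : y1 = g * a := by
    rw [ha, Int.mul_ediv_cancel']; exact Int.gcd_dvd_left y1 y2
  have hy2 : y2 = g * b := by
    rw [hb, Int.mul_ediv_cancel']; exact Int.gcd_dvd_right y1 y2
  have hab : Int.gcd a b = 1 := by
    rw [ha, hb, hg]
    exact Int.gcd_div_gcd_div_gcd (Nat.pos_of_ne_zero (by simpa [hg, Int.natCast_eq_zero] using hg0))
  have hbez : a * Int.gcdA a b + b * Int.gcdB a b = 1 := by
    have := Int.gcd_eq_gcd_ab a b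
    rw [hab] at this
    exact_mod_cast this.symm
  set p := Int.gcdA a b
  set q := Int.gcdB a b
  refine ⟨⟨!![a, -q; b, p], by rw [Matrix.det_fin_two_of]; ring_nf; linarith⟩, fun N => ?_⟩
  have hAe1 : (!![a, -q; b, p]).mulVec ![1,0] = ![a,b] := by
    ext i
    fin_cases i <;> simp [Matrix.mulVec, Fin.sum_univ_two, Matrix.vecHead, Matrix.vecTail]
  set A : SL(2,ℤ) := ⟨!![a, -q; b, p], by rw [Matrix.det_fin_two_of]; ring_nf; linarith⟩ with hAdef
  have hyvec : (![y1, y2] : Fin 2 → ℤ) = g • ![a, b] := by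
    ext i; fin_cases i <;> simp [hy1, hy2]
  have step1 : (N : Matrix (Fin 2) (Fin 2) ℤ).mulVec ![y1,y2] = ![y1,y2] ↔
      (N : Matrix (Fin 2) (Fin 2) ℤ).mulVec ![a,b] = ![a,b] := by
    rw [hyvec, Matrix.mulVec_smul]
    exact ⟨fun h => smul_right_injective (Fin 2 → ℤ) hg0 h, fun h => by rw [h]⟩
  have step2 : (N : Matrix (Fin 2) (Fin 2) ℤ).mulVec ![a,b] = ![a,b] ↔
      ((A⁻¹ * N * A : SL(2,ℤ)) : Matrix (Fin 2) (Fin 2) ℤ).mulVec ![1,0] = ![1,0] := by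
    rw [Matrix.SpecialLinearGroup.coe_mul, Matrix.SpecialLinearGroup.coe_mul,
      ← Matrix.mulVec_mulVec, ← Matrix.mulVec_mulVec]
    have : (A : Matrix (Fin 2) (Fin 2) ℤ).mulVec ![1,0] = ![a,b] := hAe1
    rw [this, mulVec_inv_iff A⁻¹, inv_inv, this]
  rw [step1, step2, stab_e1]
  constructor
  · rintro ⟨t, ht⟩
    exact ⟨t, by rw [← ht]; group⟩
  · rintro ⟨t, rfl⟩
    exact ⟨t, by group⟩

/-- For `x ≠ 0`, the solution set of `M x = y` over `M ∈ SL(2,ℤ)` is either empty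
or equal to `{ B * T^(k*t) * C : t ∈ ℤ }` for some `B, C ∈ SL(2,ℤ)` and `k ∈ ℤ`,
where `T = !![1,1; 0,1]`. -/
theorem solutions_eq_BTktC (x1 x2 y1 y2 : ℤ) (hx : ¬(x1 = 0 ∧ x2 = 0)) :
    (¬ ∃ M : SL(2, ℤ), (M : Matrix (Fin 2) (Fin 2) ℤ).mulVec ![x1, x2] = ![y1, y2]) ∨
    ∃ (B C : SL(2, ℤ)) (k : ℤ),
      {M : SL(2, ℤ) | (M : Matrix (Fin 2) (Fin 2) ℤ).mulVec ![x1, x2] = ![y1, y2]} =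
        {M : SL(2, ℤ) | ∃ t : ℤ, M = B * ModularGroup.T ^ (k * t) * C} := by
  by_cases h : ∃ M : SL(2, ℤ), (M : Matrix (Fin 2) (Fin 2) ℤ).mulVec ![x1, x2] = ![y1, y2]
  · right
    obtain ⟨M₀, hM₀⟩ := h
    have hx0 : (![x1, x2] : Fin 2 → ℤ) = ((M₀⁻¹ : SL(2,ℤ)) : Matrix (Fin 2) (Fin 2) ℤ).mulVec ![y1, y2] :=
      (mulVec_inv_iff M₀ _ _).mp hM₀
    have hy : ¬(y1 = 0 ∧ y2 = 0) := by
      rintro ⟨rfl, rfl⟩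
      apply hx
      have : (![x1, x2] : Fin 2 → ℤ) = 0 := by
        rw [hx0]
        ext i
        simp [Matrix.mulVec]
      exact ⟨congrFun this 0, congrFun this 1⟩
    obtain ⟨A, hA⟩ := stab_vec y1 y2 hy
    refine ⟨A, A⁻¹ * M₀, 1, ?_⟩
    ext M
    simp only [Set.mem_setOf_eq, one_mul]
    have key : (M : Matrix (Fin 2) (Fin 2) ℤ).mulVec ![x1, x2] = ![y1, y2] ↔
        ((M * M₀⁻¹ : SL(2,ℤ)) : Matrix (Fin 2) (Fin 2) ℤ).mulVec ![y1, y2] = ![y1, y2] := by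
      rw [Matrix.SpecialLinearGroup.coe_mul, ← Matrix.mulVec_mulVec, ← hx0]
    rw [key, hA]
    constructor
    · rintro ⟨t, ht⟩
      refine ⟨t, ?_⟩
      have : M = A * ModularGroup.T ^ t * A⁻¹ * M₀ := by
        rw [← ht]; group
      rw [this]; group
    · rintro ⟨t, rfl⟩
      exact ⟨t, by group⟩
  · left; exact h
end

section
/- Let x = (x1, x2) and y = (y1, y2) be vectors in Z × Z with x not equal to the zero vector. If the matrix equation M x = y has a solution M in SL(2,Z), then there exist matrices B and C in SL(2,Z) such that the set of all solutions is exactly { B·T^{t}·C : t ∈ Z }, where T is the matrix with rows (1,1) and (0,1). -/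
open Matrix MatrixGroups

lemma inv_mulVec_of_mulVec (P : SL(2, ℤ)) (v w : Fin 2 → ℤ)
    (h : (P : Matrix (Fin 2) (Fin 2) ℤ).mulVec v = w) :
    ((P⁻¹ : SL(2, ℤ)) : Matrix (Fin 2) (Fin 2) ℤ).mulVec w = v := by
  rw [← h, Matrix.mulVec_mulVec]
  have : ((P⁻¹ : SL(2, ℤ)) : Matrix (Fin 2) (Fin 2) ℤ) * (P : Matrix (Fin 2) (Fin 2) ℤ) = 1 := by
    rw [← Matrix.SpecialLinearGroup.coe_mul, inv_mul_cancel,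
      Matrix.SpecialLinearGroup.coe_one]
  rw [this, Matrix.one_mulVec]

lemma fixes_iff_T_zpow (g : ℤ) (hg : g ≠ 0) (N : SL(2, ℤ)) :
    (N : Matrix (Fin 2) (Fin 2) ℤ).mulVec ![g, 0] = ![g, 0] ↔
      ∃ t : ℤ, N = ModularGroup.T ^ t := by
  constructor
  · intro h
    have h0 := congrFun h 0
    have h1 := congrFun h 1
    simp [Matrix.mulVec, dotProduct, Fin.sum_univ_two] at h0 h1
    have e00 : (N : Matrix (Fin 2) (Fin 2) ℤ) 0 0 = 1 := by
      have := mul_right_cancel₀ hg (by linarith : (N : Matrix (Fin 2) (Fin 2) ℤ) 0 0 * g = 1 * g)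
      linarith
    have e10 : (N : Matrix (Fin 2) (Fin 2) ℤ) 1 0 = 0 := by
      rcases h1 with h | h
      · exact h
      · exact absurd h hg
    have hdet := N.2
    rw [Matrix.det_fin_two] at hdet
    have e11 : (N : Matrix (Fin 2) (Fin 2) ℤ) 1 1 = 1 := by
      rw [e00, e10] at hdet; linarith
    refine ⟨(N : Matrix (Fin 2) (Fin 2) ℤ) 0 1, ?_⟩
    ext i j
    fin_cases i <;> fin_cases j <;>
      simp [ModularGroup.coe_T_zpow, e00, e10, e11]
  · rintro ⟨t, rfl⟩
    rw [ModularGroup.coe_T_zpow]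
    funext i
    fin_cases i <;> simp [Matrix.mulVec, dotProduct, Fin.sum_univ_two]

/-- For `x ≠ 0`, if the equation `M x = y` has a solution `M ∈ SL(2,ℤ)`, then the set of
all solutions is exactly `{ B * T^t * C : t ∈ ℤ }` for some `B, C ∈ SL(2,ℤ)`,
where `T = !![1,1; 0,1]`. -/
theorem solutions_eq_BTtC (x1 x2 y1 y2 : ℤ) (hx : ¬(x1 = 0 ∧ x2 = 0))
    (hsol : ∃ M : SL(2, ℤ), (M : Matrix (Fin 2) (Fin 2) ℤ).mulVec ![x1, x2] = ![y1, y2]) :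
    ∃ B C : SL(2, ℤ),
      {M : SL(2, ℤ) | (M : Matrix (Fin 2) (Fin 2) ℤ).mulVec ![x1, x2] = ![y1, y2]} =
        {M : SL(2, ℤ) | ∃ t : ℤ, M = B * ModularGroup.T ^ t * C} := by
  obtain ⟨M₀, h₀⟩ := hsol
  set g : ℤ := (Int.gcd x1 x2 : ℤ) with hgdef
  have hg : g ≠ 0 := by
    simp only [hgdef, ne_eq, Int.natCast_eq_zero, Int.gcd_eq_zero_iff]
    exact hx
  obtain ⟨a, ha⟩ : g ∣ x1 := Int.gcd_dvd_left x1 x2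
  obtain ⟨b, hb⟩ : g ∣ x2 := Int.gcd_dvd_right x1 x2
  set u : ℤ := Int.gcdA x1 x2 with hu
  set v : ℤ := Int.gcdB x1 x2 with hv
  have key : x1 * u + x2 * v = g := (Int.gcd_eq_gcd_ab x1 x2).symm
  have hbez : u * a + v * b = 1 := by
    have : g * (u * a + v * b) = g * 1 := by
      rw [ha, hb] at key; ring_nf; ring_nf at key; linarith
    exact mul_left_cancel₀ hg this
  set A : SL(2, ℤ) := ⟨!![u, v; -b, a], by
    rw [Matrix.det_fin_two]; simp; linarith⟩ with hA
  have hAcoe : (A : Matrix (Fin 2) (Fin 2) ℤ) = !![u, v; -b, a] := rfl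
  have hAx : (A : Matrix (Fin 2) (Fin 2) ℤ).mulVec ![x1, x2] = ![g, 0] := by
    funext i
    fin_cases i
    · simp [hAcoe, Matrix.mulVec, dotProduct, Fin.sum_univ_two, ha, hb]
      linear_combination g * hbez
    · simp [hAcoe, Matrix.mulVec, dotProduct, Fin.sum_univ_two, ha, hb]
      ring
  have hAinv : ((A⁻¹ : SL(2, ℤ)) : Matrix (Fin 2) (Fin 2) ℤ).mulVec ![g, 0] = ![x1, x2] :=
    inv_mulVec_of_mulVec A _ _ hAx
  have hM₀inv : ((M₀⁻¹ : SL(2, ℤ)) : Matrix (Fin 2) (Fin 2) ℤ).mulVec ![y1, y2] = ![x1, x2] :=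
    inv_mulVec_of_mulVec M₀ _ _ h₀
  refine ⟨M₀ * A⁻¹, A, ?_⟩
  ext M
  simp only [Set.mem_setOf_eq]
  constructor
  · intro h
    have hfix : ((A * M₀⁻¹ * M * A⁻¹ : SL(2, ℤ)) : Matrix (Fin 2) (Fin 2) ℤ).mulVec ![g, 0]
        = ![g, 0] := by
      simp only [Matrix.SpecialLinearGroup.coe_mul, ← Matrix.mulVec_mulVec]
      rw [hAinv, h, hM₀inv, hAx]
    obtain ⟨t, ht⟩ := (fixes_iff_T_zpow g hg _).mp hfix
    refine ⟨t, ?_⟩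
    rw [← ht]
    group
  · rintro ⟨t, rfl⟩
    have hT : ((ModularGroup.T ^ t : SL(2, ℤ)) : Matrix (Fin 2) (Fin 2) ℤ).mulVec ![g, 0]
        = ![g, 0] := (fixes_iff_T_zpow g hg _).mpr ⟨t, rfl⟩
    simp only [Matrix.SpecialLinearGroup.coe_mul, ← Matrix.mulVec_mulVec]
    rw [hAx, hT, hAinv, h₀]
end

section
/- Let x and y be rational numbers and let F(x,y) = { M ∈ SL(2,Z) : f_M(x) = y }, where for M with entries a,b,c,d the condition f_M(x) = y means c·x + d ≠ 0 and (a·x + b)/(c·x + d) = y. Then F(x,y) = F1 ∪ F2, where each Fi is either empty or of the form { B_i·T^{t}·C_i : t ∈ Z } for some matrices B_i, C_i in SL(2,Z), where T is the matrix with rows (1,1) and (0,1). -/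
open Matrix MatrixGroups

/-- The fractional linear transformation condition `f_M(x) = y` for `M = !![a,b; c,d]`:
`c·x + d ≠ 0` and `(a·x + b)/(c·x + d) = y`. -/
def FltMaps (M : Matrix (Fin 2) (Fin 2) ℤ) (x y : ℚ) : Prop :=
  (M 1 0 : ℚ) * x + (M 1 1 : ℚ) ≠ 0 ∧
    ((M 0 0 : ℚ) * x + (M 0 1 : ℚ)) / ((M 1 0 : ℚ) * x + (M 1 1 : ℚ)) = y

def mkSL (a b c d : ℤ) (h : a*d - b*c = 1) : SL(2,ℤ) :=
  ⟨!![a,b;c,d], by simp [Matrix.det_fin_two_of]; linarith⟩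

lemma flt_iff (M : Matrix (Fin 2) (Fin 2) ℤ) (x y : ℚ) :
    FltMaps M x y ↔
      (M 1 0 * x.num + M 1 1 * (x.den:ℤ) ≠ 0 ∧
       (M 0 0 * x.num + M 0 1 * (x.den:ℤ)) * (y.den:ℤ) =
         y.num * (M 1 0 * x.num + M 1 1 * (x.den:ℤ))) := by
  have hq : ((x.den:ℤ):ℚ) ≠ 0 := by
    exact_mod_cast Nat.cast_ne_zero.mpr x.den_nz
  have hs : ((y.den:ℤ):ℚ) ≠ 0 := by
    exact_mod_cast Nat.cast_ne_zero.mpr y.den_nz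
  have hx : x = ((x.num:ℤ):ℚ)/((x.den:ℤ):ℚ) := by
    push_cast; exact (Rat.num_div_den x).symm
  have hy : y = ((y.num:ℤ):ℚ)/((y.den:ℤ):ℚ) := by
    push_cast; exact (Rat.num_div_den y).symm
  set p := x.num with hp
  set q := (x.den : ℤ) with hqd
  set r := y.num with hr
  set s := (y.den : ℤ) with hsd
  have key1 : (M 1 0 : ℚ) * x + (M 1 1 : ℚ) = ((M 1 0 * p + M 1 1 * q : ℤ):ℚ)/(q:ℚ) := by
    rw [hx]; push_cast; field_simp
  have key0 : (M 0 0 : ℚ) * x + (M 0 1 : ℚ) = ((M 0 0 * p + M 0 1 * q : ℤ):ℚ)/(q:ℚ) := by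
    rw [hx]; push_cast; field_simp
  rw [FltMaps, key0, key1]
  constructor
  · rintro ⟨h1, h2⟩
    have hV : ((M 1 0 * p + M 1 1 * q : ℤ):ℚ) ≠ 0 := by
      intro h0; apply h1; rw [h0]; simp
    refine ⟨by exact_mod_cast hV, ?_⟩
    rw [div_div_div_cancel_right₀ hq, hy, div_eq_div_iff hV hs] at h2
    exact_mod_cast h2
  · rintro ⟨h1, h2⟩
    have hV : ((M 1 0 * p + M 1 1 * q : ℤ):ℚ) ≠ 0 := Int.cast_ne_zero.mpr h1
    refine ⟨div_ne_zero hV hq, ?_⟩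
    rw [div_div_div_cancel_right₀ hq, hy, div_eq_div_iff hV hs]
    exact_mod_cast h2

lemma main_aux (M A B : SL(2,ℤ)) (p q r s uA vA uB vB : ℤ)
    (hA : (A : Matrix (Fin 2) (Fin 2) ℤ) = !![p, -vA; q, uA])
    (hB : (B : Matrix (Fin 2) (Fin 2) ℤ) = !![r, -vB; s, uB])
    (hbA : p*uA + vA*q = 1) (hbB : r*uB + vB*s = 1)
    (hu : (M : Matrix (Fin 2) (Fin 2) ℤ) 0 0 * p + (M : Matrix (Fin 2) (Fin 2) ℤ) 0 1 * q = r)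
    (hv : (M : Matrix (Fin 2) (Fin 2) ℤ) 1 0 * p + (M : Matrix (Fin 2) (Fin 2) ℤ) 1 1 * q = s) :
    ∃ t : ℤ, M = B * ModularGroup.T ^ t * A⁻¹ := by
  set a := (M : Matrix (Fin 2) (Fin 2) ℤ) 0 0 with ha
  set b := (M : Matrix (Fin 2) (Fin 2) ℤ) 0 1 with hb
  set c := (M : Matrix (Fin 2) (Fin 2) ℤ) 1 0 with hc
  set d := (M : Matrix (Fin 2) (Fin 2) ℤ) 1 1 with hd
  have hdet : a*d - b*c = 1 := by
    have := M.2
    rw [Matrix.det_fin_two] at this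
    linarith
  set w1 : ℤ := a*(-vA) + b*uA with hw1
  set w2 : ℤ := c*(-vA) + d*uA with hw2
  have hw : r*w2 - s*w1 = 1 := by
    rw [hw1, hw2]
    linear_combination (-(c*(-vA) + d*uA))*hu + (a*(-vA) + b*uA)*hv + (p*uA + q*vA)*hdet + hbA
  refine ⟨uB*w1 + vB*w2, ?_⟩
  rw [eq_mul_inv_iff_mul_eq]
  apply Subtype.ext
  show (M : Matrix (Fin 2) (Fin 2) ℤ) * (A : Matrix (Fin 2) (Fin 2) ℤ) = (B : Matrix (Fin 2) (Fin 2) ℤ) *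
    ((ModularGroup.T ^ (uB*w1 + vB*w2) : SL(2,ℤ)) : Matrix (Fin 2) (Fin 2) ℤ)
  rw [hB, ModularGroup.coe_T_zpow, hA]
  rw [Matrix.eta_fin_two (M : Matrix (Fin 2) (Fin 2) ℤ), ← ha, ← hb, ← hc, ← hd]
  ext i j
  fin_cases i <;> fin_cases j <;>
    simp [Matrix.mul_apply, Fin.sum_univ_two]
  · linarith [hu]
  · linear_combination (-vB)*hw - w1*hbB
  · linarith [hv]
  · linear_combination uB*hw - w2*hbB

lemma backward_aux (M A B : SL(2,ℤ)) (p q r s uA vA uB vB t : ℤ)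
    (hA : (A : Matrix (Fin 2) (Fin 2) ℤ) = !![p, -vA; q, uA])
    (hB : (B : Matrix (Fin 2) (Fin 2) ℤ) = !![r, -vB; s, uB])
    (ht : M = B * ModularGroup.T ^ t * A⁻¹) :
    (M : Matrix (Fin 2) (Fin 2) ℤ) 0 0 * p + (M : Matrix (Fin 2) (Fin 2) ℤ) 0 1 * q = r ∧
    (M : Matrix (Fin 2) (Fin 2) ℤ) 1 0 * p + (M : Matrix (Fin 2) (Fin 2) ℤ) 1 1 * q = s := by
  have h : M * A = B * ModularGroup.T ^ t := by
    rw [ht, inv_mul_cancel_right]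
  have hM : (M : Matrix (Fin 2) (Fin 2) ℤ) * !![p, -vA; q, uA]
      = !![r, -vB; s, uB] * !![1, t; 0, 1] := by
    rw [← hA, ← hB, ← ModularGroup.coe_T_zpow]
    exact congrArg (fun X : SL(2,ℤ) => (X : Matrix (Fin 2) (Fin 2) ℤ)) h
  constructor
  · have := congrFun (congrFun hM 0) 0
    simpa [Matrix.mul_apply, Fin.sum_univ_two] using this
  · have := congrFun (congrFun hM 1) 0
    simpa [Matrix.mul_apply, Fin.sum_univ_two] using this

/-- The set `F(x,y) = { M ∈ SL(2,ℤ) : f_M(x) = y }` is a union `F1 ∪ F2`, where each `Fi`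
is either empty or of the form `{ B_i * T^t * C_i : t ∈ ℤ }` with `B_i, C_i ∈ SL(2,ℤ)`,
where `T = !![1,1; 0,1]`. -/
theorem flt_solution_set_union (x y : ℚ) :
    ∃ F1 F2 : Set SL(2, ℤ),
      {M : SL(2, ℤ) | FltMaps (M : Matrix (Fin 2) (Fin 2) ℤ) x y} = F1 ∪ F2 ∧
      (F1 = ∅ ∨ ∃ B C : SL(2, ℤ),
        F1 = {M : SL(2, ℤ) | ∃ t : ℤ, M = B * ModularGroup.T ^ t * C}) ∧
      (F2 = ∅ ∨ ∃ B C : SL(2, ℤ),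
        F2 = {M : SL(2, ℤ) | ∃ t : ℤ, M = B * ModularGroup.T ^ t * C}) := by
  set p := x.num with hp
  set q := (x.den : ℤ) with hqd
  set r := y.num with hr
  set s := (y.den : ℤ) with hsd
  have hq0 : 0 < q := by rw [hqd]; exact_mod_cast x.pos
  have hs0 : 0 < s := by rw [hsd]; exact_mod_cast y.pos
  have hcx : IsCoprime p q := by
    rw [Int.isCoprime_iff_gcd_eq_one]
    exact x.reduced
  have hcy : IsCoprime r s := by
    rw [Int.isCoprime_iff_gcd_eq_one]
    exact y.reduced
  obtain ⟨uA, vA, hbA⟩ := id hcx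
  obtain ⟨uB, vB, hbB⟩ := id hcy
  set A := mkSL p (-vA) q uA (by linear_combination hbA) with hAdef
  set B := mkSL r (-vB) s uB (by linear_combination hbB) with hBdef
  set B' := mkSL (-r) vB (-s) (-uB) (by linear_combination hbB) with hB'def
  have hAcoe : (A : Matrix (Fin 2) (Fin 2) ℤ) = !![p, -vA; q, uA] := rfl
  have hBcoe : (B : Matrix (Fin 2) (Fin 2) ℤ) = !![r, -vB; s, uB] := rfl
  have hB'coe : (B' : Matrix (Fin 2) (Fin 2) ℤ) = !![-r, -(-vB); -s, -uB] := by
    norm_num [mkSL, hB'def]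
  refine ⟨{M : SL(2,ℤ) | ∃ t : ℤ, M = B * ModularGroup.T ^ t * A⁻¹},
          {M : SL(2,ℤ) | ∃ t : ℤ, M = B' * ModularGroup.T ^ t * A⁻¹}, ?_,
          Or.inr ⟨B, A⁻¹, rfl⟩, Or.inr ⟨B', A⁻¹, rfl⟩⟩
  ext M
  simp only [Set.mem_setOf_eq, Set.mem_union]
  rw [flt_iff]
  constructor
  · rintro ⟨h1, h2⟩
    set a := (M : Matrix (Fin 2) (Fin 2) ℤ) 0 0 with ha
    set b := (M : Matrix (Fin 2) (Fin 2) ℤ) 0 1 with hb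
    set c := (M : Matrix (Fin 2) (Fin 2) ℤ) 1 0 with hc
    set d := (M : Matrix (Fin 2) (Fin 2) ℤ) 1 1 with hd
    have hdet : a*d - b*c = 1 := by
      have := M.2
      rw [Matrix.det_fin_two] at this
      linarith
    have hsdvd : s ∣ r * (c*p + d*q) := ⟨a*p + b*q, by linarith⟩
    obtain ⟨k, hk⟩ := (IsCoprime.dvd_of_dvd_mul_left hcy.symm hsdvd : s ∣ (c*p + d*q))
    have hu : a*p + b*q = r * k := by
      have hs0' : s ≠ 0 := ne_of_gt hs0
      apply mul_right_cancel₀ hs0'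
      rw [h2, hk]; ring
    have hkq : k ∣ q := ⟨a*s - c*r, by linear_combination a*hk - c*hu - q*hdet⟩
    have hkp : k ∣ p := ⟨d*r - b*s, by linear_combination d*hu - b*hk - p*hdet⟩
    rcases Int.isUnit_iff.mp (hcx.isUnit_of_dvd' hkp hkq) with hk1 | hk1
    · exact Or.inl (main_aux M A B p q r s uA vA uB vB hAcoe hBcoe
        (by linear_combination hbA) (by linear_combination hbB)
        (by rw [hu, hk1, mul_one]) (by rw [hk, hk1, mul_one]))
    · exact Or.inr (main_aux M A B' p q (-r) (-s) uA vA (-uB) (-vB) hAcoe hB'coe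
        (by linear_combination hbA) (by linear_combination hbB)
        (by rw [hu, hk1]; ring) (by rw [hk, hk1]; ring))
  · rintro (⟨t, ht⟩ | ⟨t, ht⟩)
    · obtain ⟨hu, hv⟩ := backward_aux M A B p q r s uA vA uB vB t hAcoe hBcoe ht
      exact ⟨by rw [hv]; exact ne_of_gt hs0, by rw [hu, hv]⟩
    · obtain ⟨hu, hv⟩ := backward_aux M A B' p q (-r) (-s) uA vA (-uB) (-vB) t hAcoe hB'coe ht
      refine ⟨by rw [hv]; exact neg_ne_zero.mpr (ne_of_gt hs0), by rw [hu, hv]; ring⟩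
end

section
/- Let x = (x1, x2) and y = (y1, y2) be vectors in Z × Z, let B and C be matrices in SL(2,Z), and let k be a nonzero integer such that B·T^{k t}·C·x = y for every t ∈ Z, where T is the matrix with rows (1,1) and (0,1). Then the vectors u = C·x and v = B^{-1}·y satisfy u = v = (d, 0) for some integer d with |d| = gcd(x1, x2) = gcd(y1, y2). -/
open Matrix MatrixGroups

lemma gcd_mulVec_dvd (A : SL(2, ℤ)) (v : Fin 2 → ℤ) :
    (Int.gcd (v 0) (v 1) : ℤ) ∣ ((A : Matrix (Fin 2) (Fin 2) ℤ).mulVec v 0) ∧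
    (Int.gcd (v 0) (v 1) : ℤ) ∣ ((A : Matrix (Fin 2) (Fin 2) ℤ).mulVec v 1) := by
  constructor <;>
  · simp only [Matrix.mulVec, dotProduct, Fin.sum_univ_two]
    exact dvd_add (Dvd.dvd.mul_left (Int.gcd_dvd_left _ _) _)
      (Dvd.dvd.mul_left (Int.gcd_dvd_right _ _) _)

lemma gcd_mulVec (A : SL(2, ℤ)) (v : Fin 2 → ℤ) :
    Int.gcd ((A : Matrix (Fin 2) (Fin 2) ℤ).mulVec v 0)
      ((A : Matrix (Fin 2) (Fin 2) ℤ).mulVec v 1) = Int.gcd (v 0) (v 1) := by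
  apply Nat.dvd_antisymm
  · have h1 := gcd_mulVec_dvd A⁻¹ ((A : Matrix (Fin 2) (Fin 2) ℤ).mulVec v)
    have hv : ((A⁻¹ : SL(2, ℤ)) : Matrix (Fin 2) (Fin 2) ℤ).mulVec
        ((A : Matrix (Fin 2) (Fin 2) ℤ).mulVec v) = v := by
      rw [Matrix.mulVec_mulVec, ← Matrix.SpecialLinearGroup.coe_mul, inv_mul_cancel,
        Matrix.SpecialLinearGroup.coe_one, Matrix.one_mulVec]
    rw [hv] at h1
    exact Int.natCast_dvd_natCast.mp (Int.dvd_coe_gcd h1.1 h1.2)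
  · have h1 := gcd_mulVec_dvd A v
    exact Int.natCast_dvd_natCast.mp (Int.dvd_coe_gcd h1.1 h1.2)

/-- If `B * T^(k t) * C` maps `x = (x1,x2)` to `y = (y1,y2)` for every `t ∈ ℤ` (with `k ≠ 0`),
then `u = C x` and `v = B⁻¹ y` satisfy `u = v = (d, 0)` for some integer `d` with
`|d| = gcd (x1, x2) = gcd (y1, y2)`. -/
theorem reachability_via_d0 (x1 x2 y1 y2 : ℤ) (B C : SL(2, ℤ)) (k : ℤ) (hk : k ≠ 0)
    (h : ∀ t : ℤ,
      ((B * ModularGroup.T ^ (k * t) * C : SL(2, ℤ)) :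
        Matrix (Fin 2) (Fin 2) ℤ).mulVec ![x1, x2] = ![y1, y2]) :
    ∃ d : ℤ,
      (C : Matrix (Fin 2) (Fin 2) ℤ).mulVec ![x1, x2] = ![d, 0] ∧
      ((B⁻¹ : SL(2, ℤ)) : Matrix (Fin 2) (Fin 2) ℤ).mulVec ![y1, y2] = ![d, 0] ∧
      d.natAbs = Int.gcd x1 x2 ∧ d.natAbs = Int.gcd y1 y2 := by
  set u : Fin 2 → ℤ := (C : Matrix (Fin 2) (Fin 2) ℤ).mulVec ![x1, x2] with hu
  have h0 := h 0
  have h1 := h 1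
  rw [mul_zero, zpow_zero, mul_one] at h0
  rw [mul_one] at h1
  -- h0 : B.mulVec u = ![y1, y2]
  have hB : (B : Matrix (Fin 2) (Fin 2) ℤ).mulVec u = ![y1, y2] := by
    rw [hu, Matrix.mulVec_mulVec, ← Matrix.SpecialLinearGroup.coe_mul]; exact h0
  have hBT : (B : Matrix (Fin 2) (Fin 2) ℤ).mulVec
      (((ModularGroup.T ^ k : SL(2, ℤ)) : Matrix (Fin 2) (Fin 2) ℤ).mulVec u) = ![y1, y2] := by
    rw [hu, Matrix.mulVec_mulVec, Matrix.mulVec_mulVec, ← Matrix.SpecialLinearGroup.coe_mul,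
      ← Matrix.SpecialLinearGroup.coe_mul]; exact h1
  have hinv : ∀ w : Fin 2 → ℤ, ((B⁻¹ : SL(2, ℤ)) : Matrix (Fin 2) (Fin 2) ℤ).mulVec
      ((B : Matrix (Fin 2) (Fin 2) ℤ).mulVec w) = w := by
    intro w
    rw [Matrix.mulVec_mulVec, ← Matrix.SpecialLinearGroup.coe_mul, inv_mul_cancel,
      Matrix.SpecialLinearGroup.coe_one, Matrix.one_mulVec]
  have hTu : ((ModularGroup.T ^ k : SL(2, ℤ)) : Matrix (Fin 2) (Fin 2) ℤ).mulVec u = u := by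
    have := congrArg (((B⁻¹ : SL(2, ℤ)) : Matrix (Fin 2) (Fin 2) ℤ).mulVec) (hBT.trans hB.symm)
    rwa [hinv, hinv] at this
  have hu1 : u 1 = 0 := by
    have h0' := congrFun hTu 0
    rw [ModularGroup.coe_T_zpow] at h0'
    simp only [Matrix.mulVec, dotProduct, Fin.sum_univ_two, Matrix.of_apply,
      Matrix.cons_val', Matrix.cons_val_zero, Matrix.cons_val_one, Matrix.head_cons,
      Matrix.empty_val', Matrix.cons_val_fin_one, Matrix.head_fin_const, one_mul] at h0'
    have : k * u 1 = 0 := by linarith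
    exact (mul_eq_zero.mp this).resolve_left hk
  refine ⟨u 0, ?_, ?_, ?_, ?_⟩
  · funext i; fin_cases i <;> simp [hu1]
  · have := congrArg (((B⁻¹ : SL(2, ℤ)) : Matrix (Fin 2) (Fin 2) ℤ).mulVec) hB
    rw [hinv] at this
    rw [← this]; funext i; fin_cases i <;> simp [hu1]
  · have := gcd_mulVec C ![x1, x2]
    simp only [← hu, hu1, Int.gcd_zero_right] at this
    simpa using this
  · have := gcd_mulVec B u
    rw [hB] at this
    simp only [hu1, Int.gcd_zero_right] at this
    simpa using this.symm
end

section
/- Let x = (x1, x2) be a vector in Z × Z with gcd(x1, x2) = 1, and let a be an integer. Let F be the set of matrices M in SL(2,Z) such that the row vector (a, 1) times M times the column vector (x1, x2) equals 1. If F is nonempty, then there exist matrices A, D, C in SL(2,Z) and an integer k such that F = { A·T^{k s}·D·T^{t}·C : s ∈ Z, t ∈ Z }, where T is the matrix with rows (1,1) and (0,1). -/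
open Matrix MatrixGroups

/-- Let `gcd (x1, x2) = 1` and let `F` be the set of `M ∈ SL(2,ℤ)` with
`(a, 1) · M · (x1, x2)ᵀ = 1`. If `F` is nonempty, then there are `A, D, C ∈ SL(2,ℤ)` and an
integer `k` such that `F = { A * T^(k s) * D * T^t * C : s, t ∈ ℤ }`,
where `T = !![1,1; 0,1]`. -/
theorem scalar_reachability_solution_set (a x1 x2 : ℤ) (hx : Int.gcd x1 x2 = 1)
    (hne : {M : SL(2, ℤ) |
      dotProduct ![a, 1] ((M : Matrix (Fin 2) (Fin 2) ℤ).mulVec ![x1, x2]) = 1}.Nonempty) :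
    ∃ (A D C : SL(2, ℤ)) (k : ℤ),
      {M : SL(2, ℤ) |
        dotProduct ![a, 1] ((M : Matrix (Fin 2) (Fin 2) ℤ).mulVec ![x1, x2]) = 1} =
      {M : SL(2, ℤ) | ∃ s t : ℤ,
        M = A * ModularGroup.T ^ (k * s) * D * ModularGroup.T ^ t * C} := by
  obtain ⟨u, v, hc⟩ := Int.isCoprime_iff_gcd_eq_one.mpr hx
  obtain ⟨A, hA⟩ : ∃ A : SL(2, ℤ), (A : Matrix (Fin 2) (Fin 2) ℤ) = !![1, 0; -a, 1] :=
    ⟨⟨!![1, 0; -a, 1], by simp [Matrix.det_fin_two_of]⟩, rfl⟩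
  obtain ⟨C, hC⟩ : ∃ C : SL(2, ℤ), (C : Matrix (Fin 2) (Fin 2) ℤ) = !![u, v; -x2, x1] :=
    ⟨⟨!![u, v; -x2, x1], by simp [Matrix.det_fin_two_of]; linarith⟩, rfl⟩
  refine ⟨A, ModularGroup.S, C, 1, ?_⟩
  ext M
  simp only [Set.mem_setOf_eq]
  constructor
  · intro h
    simp only [dotProduct, Matrix.mulVec, Fin.sum_univ_two, Matrix.cons_val_zero,
      Matrix.cons_val_one, Matrix.head_cons, dotProduct] at h
    have hd : (M : Matrix (Fin 2) (Fin 2) ℤ) 0 0 * M 1 1 - M 0 1 * M 1 0 = 1 := by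
      have := M.2
      rwa [Matrix.det_fin_two] at this
    set p := (M : Matrix (Fin 2) (Fin 2) ℤ) 0 0 with hp
    set q := (M : Matrix (Fin 2) (Fin 2) ℤ) 0 1 with hq
    set r := (M : Matrix (Fin 2) (Fin 2) ℤ) 1 0 with hr
    set w := (M : Matrix (Fin 2) (Fin 2) ℤ) 1 1 with hw
    refine ⟨p * x1 + q * x2, u * (a * q + w) - v * (a * p + r), ?_⟩
    set s : ℤ := p * x1 + q * x2 with hs
    set t : ℤ := u * (a * q + w) - v * (a * p + r) with ht
    ext i j
    simp only [Matrix.SpecialLinearGroup.coe_mul, ModularGroup.coe_T_zpow, one_mul,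
      ModularGroup.coe_S, hA, hC]
    fin_cases i <;> fin_cases j <;>
      simp [Matrix.mul_apply, Fin.sum_univ_two, hs, ht]
    · linear_combination (s * u - p) * h + x2 * hd - (s * (a * p + r)) * hc
    · linear_combination (s * v - q) * h - x1 * hd - (s * (a * q + w)) * hc
    · linear_combination (a * p + (1 - a * s) * u) * h - a * x2 * hd -
        ((1 - a * s) * (a * p + r)) * hc
    · linear_combination (a * q + (1 - a * s) * v) * h + a * x1 * hd -
        ((1 - a * s) * (a * q + w)) * hc
  · rintro ⟨s, t, rfl⟩
    simp only [dotProduct, Matrix.mulVec, Fin.sum_univ_two, Matrix.cons_val_zero,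
      Matrix.cons_val_one, Matrix.head_cons, Matrix.SpecialLinearGroup.coe_mul,
      ModularGroup.coe_T_zpow, one_mul, ModularGroup.coe_S, hA, hC]
    simp [Matrix.mul_fin_two]
    linear_combination hc
end
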